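/- Let a1, a2, a3 ∈ (0, 1/2]. Define φ(x1,x2) = x1^(-a3/a1) * x2^(-a3/a2) for x1, x2 > 0, and set f̃(x1,x2) = f(x1, x2, φ(x1,x2)) and g̃(x1,x2) = g(x1, x2, φ(x1,x2)). Suppose x1⁰, x2⁰ > 0 satisfy f̃(x1⁰,x2⁰) = g̃(x1⁰,x2⁰) = 0, and set x3⁰ = φ(x1⁰,x2⁰). Let J be the 2×2 Jacobian matrix of (f̃, g̃) at (x1⁰, x2⁰) and let J̃ be the 3×3 Jacobian matrix of (f, g, h) at (x1⁰, x2⁰, x3⁰). Then trace J = trace J̃ and det J = ((trace J̃)^2 - trace(J̃^2))/2, i.e., the trace and determinant of J equal, respectively, the coefficient ρ̃ and the coefficient δ̃ in the characteristic polynomial t^3 - ρ̃ t^2 + δ̃ t of J̃. -/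

import Mathlib

noncomputable section
open Real Set

/-- `A = a1*a2 + a1*a3 + a2*a3`. -/
def AA (a1 a2 a3 : ℝ) : ℝ := a1*a2 + a1*a3 + a2*a3

/-- The auxiliary function `B`. -/
def Bfun (a1 a2 a3 x1 x2 x3 : ℝ) : ℝ :=
  (1/(a1*x1) + 1/(a2*x2) + 1/(a3*x3) - (x1/(x2*x3) + x2/(x1*x3) + x3/(x1*x2))) *
    (1/a1 + 1/a2 + 1/a3)⁻¹

/-- First component of the normalized Ricci flow vector field. -/
def fRF (a1 a2 a3 x1 x2 x3 : ℝ) : ℝ :=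
  -1 - a1*x1*(x1/(x2*x3) - x2/(x1*x3) - x3/(x1*x2)) + x1 * Bfun a1 a2 a3 x1 x2 x3

/-- Second component of the normalized Ricci flow vector field. -/
def gRF (a1 a2 a3 x1 x2 x3 : ℝ) : ℝ :=
  -1 - a2*x2*(x2/(x1*x3) - x3/(x1*x2) - x1/(x2*x3)) + x2 * Bfun a1 a2 a3 x1 x2 x3

/-- Third component of the normalized Ricci flow vector field. -/
def hRF (a1 a2 a3 x1 x2 x3 : ℝ) : ℝ :=
  -1 - a3*x3*(x3/(x1*x2) - x1/(x2*x3) - x2/(x1*x3)) + x3 * Bfun a1 a2 a3 x1 x2 x3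

/-- The 3×3 Jacobian matrix of `(f, g, h)` at `(x1, x2, x3)`,
with entries given by partial derivatives. -/
def Jmat3 (a1 a2 a3 x1 x2 x3 : ℝ) : Matrix (Fin 3) (Fin 3) ℝ :=
  !![deriv (fun s => fRF a1 a2 a3 s x2 x3) x1, deriv (fun s => fRF a1 a2 a3 x1 s x3) x2,
       deriv (fun s => fRF a1 a2 a3 x1 x2 s) x3;
     deriv (fun s => gRF a1 a2 a3 s x2 x3) x1, deriv (fun s => gRF a1 a2 a3 x1 s x3) x2,
       deriv (fun s => gRF a1 a2 a3 x1 x2 s) x3;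
     deriv (fun s => hRF a1 a2 a3 s x2 x3) x1, deriv (fun s => hRF a1 a2 a3 x1 s x3) x2,
       deriv (fun s => hRF a1 a2 a3 x1 x2 s) x3]

/-- The map `φ` parametrizing the level surface `V = 1`. -/
def phiV (a1 a2 a3 x1 x2 : ℝ) : ℝ := x1 ^ (-(a3/a1)) * x2 ^ (-(a3/a2))

/-- The reduced planar system components. -/
def fTilde (a1 a2 a3 x1 x2 : ℝ) : ℝ := fRF a1 a2 a3 x1 x2 (phiV a1 a2 a3 x1 x2)

def gTilde (a1 a2 a3 x1 x2 : ℝ) : ℝ := gRF a1 a2 a3 x1 x2 (phiV a1 a2 a3 x1 x2)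

/-- The 2×2 Jacobian matrix of the reduced planar system. -/
def Jmat2 (a1 a2 a3 x1 x2 : ℝ) : Matrix (Fin 2) (Fin 2) ℝ :=
  !![deriv (fun s => fTilde a1 a2 a3 s x2) x1, deriv (fun s => fTilde a1 a2 a3 x1 s) x2;
     deriv (fun s => gTilde a1 a2 a3 s x2) x1, deriv (fun s => gTilde a1 a2 a3 x1 s) x2]

/-- Conservation identity: `V` is a first integral of the flow. -/
lemma conserveRF (a1 a2 a3 x1 x2 x3 : ℝ) (ha1 : 0 < a1) (ha2 : 0 < a2) (ha3 : 0 < a3)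
    (hx1 : x1 ≠ 0) (hx2 : x2 ≠ 0) (hx3 : x3 ≠ 0) :
    fRF a1 a2 a3 x1 x2 x3 / (a1*x1) + gRF a1 a2 a3 x1 x2 x3 / (a2*x2)
      + hRF a1 a2 a3 x1 x2 x3 / (a3*x3) = 0 := by
  have hK : 1/a1 + 1/a2 + 1/a3 ≠ 0 := by positivity
  unfold fRF gRF hRF Bfun
  field_simp
  ring

lemma clm_expand (L : ℝ×ℝ →L[ℝ] ℝ) (c : ℝ) : L (1, c) = L (1,0) + c * L (0,1) := by
  have h : ((1:ℝ), c) = ((1:ℝ),(0:ℝ)) + c • ((0:ℝ),(1:ℝ)) := by simp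
  rw [h, map_add, map_smul, smul_eq_mul]

set_option maxHeartbeats 4000000 in
set_option maxRecDepth 10000 in
theorem reduced_jacobian_trace_det (a1 a2 a3 x1 x2 : ℝ)
    (ha1 : a1 ∈ Ioc (0:ℝ) (1/2)) (ha2 : a2 ∈ Ioc (0:ℝ) (1/2)) (ha3 : a3 ∈ Ioc (0:ℝ) (1/2))
    (hx1 : 0 < x1) (hx2 : 0 < x2)
    (hf : fTilde a1 a2 a3 x1 x2 = 0) (hg : gTilde a1 a2 a3 x1 x2 = 0) :
    (Jmat2 a1 a2 a3 x1 x2).trace = (Jmat3 a1 a2 a3 x1 x2 (phiV a1 a2 a3 x1 x2)).trace ∧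
    (Jmat2 a1 a2 a3 x1 x2).det
      = ((Jmat3 a1 a2 a3 x1 x2 (phiV a1 a2 a3 x1 x2)).trace^2
          - (Jmat3 a1 a2 a3 x1 x2 (phiV a1 a2 a3 x1 x2)
              * Jmat3 a1 a2 a3 x1 x2 (phiV a1 a2 a3 x1 x2)).trace) / 2 := by
  obtain ⟨ha1p, -⟩ := ha1
  obtain ⟨ha2p, -⟩ := ha2
  obtain ⟨ha3p, -⟩ := ha3
  have hx3p : 0 < phiV a1 a2 a3 x1 x2 := by
    unfold phiV; positivity
  set x3 : ℝ := phiV a1 a2 a3 x1 x2 with hx3def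
  have h1 : x1 ≠ 0 := hx1.ne'
  have h2 : x2 ≠ 0 := hx2.ne'
  have h3 : x3 ≠ 0 := hx3p.ne'
  have b1 : a1 ≠ 0 := ha1p.ne'
  have b2 : a2 ≠ 0 := ha2p.ne'
  have b3 : a3 ≠ 0 := ha3p.ne'
  -- values at the point
  have hfP : fRF a1 a2 a3 x1 x2 x3 = 0 := by rw [hx3def]; exact hf
  have hgP : gRF a1 a2 a3 x1 x2 x3 = 0 := by rw [hx3def]; exact hg
  have hhP : hRF a1 a2 a3 x1 x2 x3 = 0 := by
    have hc := conserveRF a1 a2 a3 x1 x2 x3 ha1p ha2p ha3p h1 h2 h3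
    rw [hfP, hgP] at hc
    field_simp at hc
    simpa [b1, b2, h1, h2] using hc
  -- differentiability of the three components as maps of (first,third) and (second,third) vars
  have dFf : DifferentiableAt ℝ (fun w : ℝ×ℝ => fRF a1 a2 a3 w.1 x2 w.2) (x1, x3) := by
    simp only [fRF, Bfun, div_eq_mul_inv]; fun_prop (disch := positivity)
  have dGf : DifferentiableAt ℝ (fun w : ℝ×ℝ => gRF a1 a2 a3 w.1 x2 w.2) (x1, x3) := by
    simp only [gRF, Bfun, div_eq_mul_inv]; fun_prop (disch := positivity)
  have dHf : DifferentiableAt ℝ (fun w : ℝ×ℝ => hRF a1 a2 a3 w.1 x2 w.2) (x1, x3) := by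
    simp only [hRF, Bfun, div_eq_mul_inv]; fun_prop (disch := positivity)
  have dFs : DifferentiableAt ℝ (fun w : ℝ×ℝ => fRF a1 a2 a3 x1 w.1 w.2) (x2, x3) := by
    simp only [fRF, Bfun, div_eq_mul_inv]; fun_prop (disch := positivity)
  have dGs : DifferentiableAt ℝ (fun w : ℝ×ℝ => gRF a1 a2 a3 x1 w.1 w.2) (x2, x3) := by
    simp only [gRF, Bfun, div_eq_mul_inv]; fun_prop (disch := positivity)
  have dHs : DifferentiableAt ℝ (fun w : ℝ×ℝ => hRF a1 a2 a3 x1 w.1 w.2) (x2, x3) := by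
    simp only [hRF, Bfun, div_eq_mul_inv]; fun_prop (disch := positivity)
  set Lf := fderiv ℝ (fun w : ℝ×ℝ => fRF a1 a2 a3 w.1 x2 w.2) (x1, x3) with hLfdef
  set Lg := fderiv ℝ (fun w : ℝ×ℝ => gRF a1 a2 a3 w.1 x2 w.2) (x1, x3) with hLgdef
  set Lh := fderiv ℝ (fun w : ℝ×ℝ => hRF a1 a2 a3 w.1 x2 w.2) (x1, x3) with hLhdef
  set Mf := fderiv ℝ (fun w : ℝ×ℝ => fRF a1 a2 a3 x1 w.1 w.2) (x2, x3) with hMfdef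
  set Mg := fderiv ℝ (fun w : ℝ×ℝ => gRF a1 a2 a3 x1 w.1 w.2) (x2, x3) with hMgdef
  set Mh := fderiv ℝ (fun w : ℝ×ℝ => hRF a1 a2 a3 x1 w.1 w.2) (x2, x3) with hMhdef
  -- curves
  have cu1 : HasDerivAt (fun s : ℝ => (s, x3)) ((1:ℝ), (0:ℝ)) x1 :=
    (hasDerivAt_id x1).prodMk (hasDerivAt_const x1 x3)
  have cu2 : HasDerivAt (fun t : ℝ => (t, x3)) ((1:ℝ), (0:ℝ)) x2 :=
    (hasDerivAt_id x2).prodMk (hasDerivAt_const x2 x3)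
  have cu3f : HasDerivAt (fun u : ℝ => (x1, u)) ((0:ℝ), (1:ℝ)) x3 :=
    (hasDerivAt_const x3 x1).prodMk (hasDerivAt_id x3)
  have cu3s : HasDerivAt (fun u : ℝ => (x2, u)) ((0:ℝ), (1:ℝ)) x3 :=
    (hasDerivAt_const x3 x2).prodMk (hasDerivAt_id x3)
  -- the nine slice derivatives
  have sF1 : HasDerivAt (fun s => fRF a1 a2 a3 s x2 x3) (Lf (1,0)) x1 :=
    by have := dFf.hasFDerivAt.comp_hasDerivAt x1 cu1; exact this
  have sG1 : HasDerivAt (fun s => gRF a1 a2 a3 s x2 x3) (Lg (1,0)) x1 :=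
    by have := dGf.hasFDerivAt.comp_hasDerivAt x1 cu1; exact this
  have sH1 : HasDerivAt (fun s => hRF a1 a2 a3 s x2 x3) (Lh (1,0)) x1 :=
    by have := dHf.hasFDerivAt.comp_hasDerivAt x1 cu1; exact this
  have sF2 : HasDerivAt (fun t => fRF a1 a2 a3 x1 t x3) (Mf (1,0)) x2 :=
    by have := dFs.hasFDerivAt.comp_hasDerivAt x2 cu2; exact this
  have sG2 : HasDerivAt (fun t => gRF a1 a2 a3 x1 t x3) (Mg (1,0)) x2 :=
    by have := dGs.hasFDerivAt.comp_hasDerivAt x2 cu2; exact this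
  have sH2 : HasDerivAt (fun t => hRF a1 a2 a3 x1 t x3) (Mh (1,0)) x2 :=
    by have := dHs.hasFDerivAt.comp_hasDerivAt x2 cu2; exact this
  have sF3 : HasDerivAt (fun u => fRF a1 a2 a3 x1 x2 u) (Lf (0,1)) x3 :=
    dFf.hasFDerivAt.comp_hasDerivAt x3 cu3f
  have sG3 : HasDerivAt (fun u => gRF a1 a2 a3 x1 x2 u) (Lg (0,1)) x3 :=
    dGf.hasFDerivAt.comp_hasDerivAt x3 cu3f
  have sH3 : HasDerivAt (fun u => hRF a1 a2 a3 x1 x2 u) (Lh (0,1)) x3 :=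
    dHf.hasFDerivAt.comp_hasDerivAt x3 cu3f
  have sF3' : HasDerivAt (fun u => fRF a1 a2 a3 x1 x2 u) (Mf (0,1)) x3 :=
    dFs.hasFDerivAt.comp_hasDerivAt x3 cu3s
  have sG3' : HasDerivAt (fun u => gRF a1 a2 a3 x1 x2 u) (Mg (0,1)) x3 :=
    dGs.hasFDerivAt.comp_hasDerivAt x3 cu3s
  have eF3 : Mf (0,1) = Lf (0,1) := sF3'.unique sF3
  have eG3 : Mg (0,1) = Lg (0,1) := sG3'.unique sG3
  -- the derivative of phi in each variable
  have hu : HasDerivAt (fun s : ℝ => s ^ (-(a3/a1)) * x2 ^ (-(a3/a2)))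
      (-(a3*x3)/(a1*x1)) x1 := by
    have h := (Real.hasDerivAt_rpow_const (p := -(a3/a1)) (Or.inl h1)).mul_const
      (x2 ^ (-(a3/a2)))
    have hval : -(a3/a1) * x1 ^ (-(a3/a1) - 1) * x2 ^ (-(a3/a2)) = -(a3*x3)/(a1*x1) := by
      rw [hx3def]
      unfold phiV
      rw [Real.rpow_sub_one h1]
      field_simp
    rwa [hval] at h
  have hv : HasDerivAt (fun t : ℝ => x1 ^ (-(a3/a1)) * t ^ (-(a3/a2)))
      (-(a3*x3)/(a2*x2)) x2 := by
    have h := (Real.hasDerivAt_rpow_const (p := -(a3/a2)) (Or.inl h2)).const_mul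
      (x1 ^ (-(a3/a1)))
    have hval : x1 ^ (-(a3/a1)) * (-(a3/a2) * x2 ^ (-(a3/a2) - 1)) = -(a3*x3)/(a2*x2) := by
      rw [hx3def]
      unfold phiV
      rw [Real.rpow_sub_one h2]
      field_simp
    rwa [hval] at h
  -- the reduced slice derivatives via chain rule
  have cuT1 : HasDerivAt (fun s : ℝ => (s, s ^ (-(a3/a1)) * x2 ^ (-(a3/a2))))
      ((1:ℝ), -(a3*x3)/(a1*x1)) x1 := (hasDerivAt_id x1).prodMk hu
  have cuT2 : HasDerivAt (fun t : ℝ => (t, x1 ^ (-(a3/a1)) * t ^ (-(a3/a2))))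
      ((1:ℝ), -(a3*x3)/(a2*x2)) x2 := (hasDerivAt_id x2).prodMk hv
  have hyT1 : (x1, x3) = (x1, x1 ^ (-(a3/a1)) * x2 ^ (-(a3/a2))) := by
    rw [hx3def]; rfl
  have hyT2 : (x2, x3) = (x2, x1 ^ (-(a3/a1)) * x2 ^ (-(a3/a2))) := by
    rw [hx3def]; rfl
  have tF1 : HasDerivAt (fun s => fTilde a1 a2 a3 s x2) (Lf (1, -(a3*x3)/(a1*x1))) x1 :=
    dFf.hasFDerivAt.comp_hasDerivAt_of_eq x1 cuT1 hyT1
  have tG1 : HasDerivAt (fun s => gTilde a1 a2 a3 s x2) (Lg (1, -(a3*x3)/(a1*x1))) x1 :=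
    dGf.hasFDerivAt.comp_hasDerivAt_of_eq x1 cuT1 hyT1
  have tF2 : HasDerivAt (fun t => fTilde a1 a2 a3 x1 t) (Mf (1, -(a3*x3)/(a2*x2))) x2 :=
    dFs.hasFDerivAt.comp_hasDerivAt_of_eq x2 cuT2 hyT2
  have tG2 : HasDerivAt (fun t => gTilde a1 a2 a3 x1 t) (Mg (1, -(a3*x3)/(a2*x2))) x2 :=
    dGs.hasFDerivAt.comp_hasDerivAt_of_eq x2 cuT2 hyT2
  -- conservation identity differentiated in each direction
  have evz1 : (fun s => fRF a1 a2 a3 s x2 x3 / (a1*s) + gRF a1 a2 a3 s x2 x3 / (a2*x2)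
      + hRF a1 a2 a3 s x2 x3 / (a3*x3)) =ᶠ[nhds x1] fun _ => (0:ℝ) := by
    filter_upwards [eventually_gt_nhds hx1] with s hs
    exact conserveRF a1 a2 a3 s x2 x3 ha1p ha2p ha3p hs.ne' h2 h3
  have evz2 : (fun t => fRF a1 a2 a3 x1 t x3 / (a1*x1) + gRF a1 a2 a3 x1 t x3 / (a2*t)
      + hRF a1 a2 a3 x1 t x3 / (a3*x3)) =ᶠ[nhds x2] fun _ => (0:ℝ) := by
    filter_upwards [eventually_gt_nhds hx2] with t ht
    exact conserveRF a1 a2 a3 x1 t x3 ha1p ha2p ha3p h1 ht.ne' h3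
  have evz3 : (fun u => fRF a1 a2 a3 x1 x2 u / (a1*x1) + gRF a1 a2 a3 x1 x2 u / (a2*x2)
      + hRF a1 a2 a3 x1 x2 u / (a3*u)) =ᶠ[nhds x3] fun _ => (0:ℝ) := by
    filter_upwards [eventually_gt_nhds hx3p] with u hu'
    exact conserveRF a1 a2 a3 x1 x2 u ha1p ha2p ha3p h1 h2 hu'.ne'
  have dcons1 : HasDerivAt (fun s => fRF a1 a2 a3 s x2 x3 / (a1*s)
      + gRF a1 a2 a3 s x2 x3 / (a2*x2) + hRF a1 a2 a3 s x2 x3 / (a3*x3))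
      ((Lf (1,0) * (a1*x1) - fRF a1 a2 a3 x1 x2 x3 * (a1*1)) / (a1*x1)^2
        + Lg (1,0) / (a2*x2) + Lh (1,0) / (a3*x3)) x1 :=
    ((sF1.div ((hasDerivAt_id x1).const_mul a1) (by positivity)).add
      (sG1.div_const _)).add (sH1.div_const _)
  have dcons2 : HasDerivAt (fun t => fRF a1 a2 a3 x1 t x3 / (a1*x1)
      + gRF a1 a2 a3 x1 t x3 / (a2*t) + hRF a1 a2 a3 x1 t x3 / (a3*x3))
      (Mf (1,0) / (a1*x1) + (Mg (1,0) * (a2*x2) - gRF a1 a2 a3 x1 x2 x3 * (a2*1)) / (a2*x2)^2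
        + Mh (1,0) / (a3*x3)) x2 :=
    ((sF2.div_const _).add
      (sG2.div ((hasDerivAt_id x2).const_mul a2) (by positivity))).add (sH2.div_const _)
  have dcons3 : HasDerivAt (fun u => fRF a1 a2 a3 x1 x2 u / (a1*x1)
      + gRF a1 a2 a3 x1 x2 u / (a2*x2) + hRF a1 a2 a3 x1 x2 u / (a3*u))
      (Lf (0,1) / (a1*x1) + Lg (0,1) / (a2*x2)
        + (Lh (0,1) * (a3*x3) - hRF a1 a2 a3 x1 x2 x3 * (a3*1)) / (a3*x3)^2) x3 :=
    ((sF3.div_const _).add (sG3.div_const _)).add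
      (sH3.div ((hasDerivAt_id x3).const_mul a3) (by positivity))
  have R1 : (Lf (1,0) * (a1*x1) - fRF a1 a2 a3 x1 x2 x3 * (a1*1)) / (a1*x1)^2
      + Lg (1,0) / (a2*x2) + Lh (1,0) / (a3*x3) = 0 := by
    rw [← dcons1.deriv, evz1.deriv_eq, deriv_const]
  have R2 : Mf (1,0) / (a1*x1) + (Mg (1,0) * (a2*x2) - gRF a1 a2 a3 x1 x2 x3 * (a2*1)) / (a2*x2)^2
      + Mh (1,0) / (a3*x3) = 0 := by
    rw [← dcons2.deriv, evz2.deriv_eq, deriv_const]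
  have R3 : Lf (0,1) / (a1*x1) + Lg (0,1) / (a2*x2)
      + (Lh (0,1) * (a3*x3) - hRF a1 a2 a3 x1 x2 x3 * (a3*1)) / (a3*x3)^2 = 0 := by
    rw [← dcons3.deriv, evz3.deriv_eq, deriv_const]
  rw [hfP] at R1
  rw [hgP] at R2
  rw [hhP] at R3
  -- null-vector relations
  have S1 : Lh (1,0) = -(a3*x3)/(a1*x1) * Lf (1,0) + -(a3*x3)/(a2*x2) * Lg (1,0) := by
    field_simp at R1 ⊢
    apply mul_left_cancel₀ (show x1 ≠ 0 by positivity)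
    linear_combination R1
  have S2 : Mh (1,0) = -(a3*x3)/(a1*x1) * Mf (1,0) + -(a3*x3)/(a2*x2) * Mg (1,0) := by
    field_simp at R2 ⊢
    apply mul_left_cancel₀ (show x2 ≠ 0 by positivity)
    linear_combination R2
  have S3 : Lh (0,1) = -(a3*x3)/(a1*x1) * Lf (0,1) + -(a3*x3)/(a2*x2) * Lg (0,1) := by
    field_simp at R3 ⊢
    apply mul_left_cancel₀ (show x3 ≠ 0 by positivity)
    linear_combination R3
  -- now compute the matrices
  have E11 : deriv (fun s => fTilde a1 a2 a3 s x2) x1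
      = Lf (1,0) + (-(a3*x3)/(a1*x1)) * Lf (0,1) := by rw [tF1.deriv, clm_expand]
  have E21 : deriv (fun s => gTilde a1 a2 a3 s x2) x1
      = Lg (1,0) + (-(a3*x3)/(a1*x1)) * Lg (0,1) := by rw [tG1.deriv, clm_expand]
  have E12 : deriv (fun t => fTilde a1 a2 a3 x1 t) x2
      = Mf (1,0) + (-(a3*x3)/(a2*x2)) * Lf (0,1) := by rw [tF2.deriv, clm_expand, eF3]
  have E22 : deriv (fun t => gTilde a1 a2 a3 x1 t) x2
      = Mg (1,0) + (-(a3*x3)/(a2*x2)) * Lg (0,1) := by rw [tG2.deriv, clm_expand, eG3]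
  constructor
  · simp only [Jmat2, Jmat3, Matrix.trace_fin_two_of, Matrix.trace_fin_three_of,
      E11, E22, sF1.deriv, sG2.deriv, sH3.deriv]
    rw [S3]
    ring
  · simp only [Jmat2, Jmat3, Matrix.det_fin_two_of, Matrix.trace_fin_two_of,
      Matrix.trace_fin_three_of, Matrix.mul_fin_three,
      E11, E21, E12, E22,
      sF1.deriv, sF2.deriv, sF3.deriv, sG1.deriv, sG2.deriv, sG3.deriv,
      sH1.deriv, sH2.deriv, sH3.deriv]
    rw [S1, S2, S3]
    ring
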